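/- Let p_0,…,p_m ∈ K[X], not all zero, and let P = Σ_{j=0}^m p_j(M) D_q^j. For d ∈ ℤ the following are equivalent: (1) the homogeneous degree d occurs in P; (2) β_d is not identically zero on ℤ; (3) β_d has only finitely many zeroes in ℤ. Moreover, if d occurs in P but not with a differentiation, then β_d is the nonzero constant function with value p_{0,d}; and if d occurs in P with a differentiation, then β_d has at most m zeroes in ℤ and the range {β_d(k) : k ∈ ℤ} is (countably) infinite. -/

import Mathlib

open Polynomial
open scoped Classical

noncomputable section

/-- The q-integer {n}_q. -/
def qInt (K : Type*) [Field K] (q : K) (n : ℤ) : K :=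
  if q = 1 then (n : K) else (q ^ n - 1) / (q - 1)

/-- The multiplication operator `M` on formal Laurent series `L = ℤ → K`:
`(M a)(n) = a(n-1)`. -/
def Mop (K : Type*) [Field K] : Module.End K (ℤ → K) where
  toFun a := fun n => a (n - 1)
  map_add' _ _ := rfl
  map_smul' _ _ := rfl

/-- The q-difference operator `D_q` on `L = ℤ → K`: `(D_q a)(n) = {n+1}_q · a(n+1)`. -/
def Dq (K : Type*) [Field K] (q : K) : Module.End K (ℤ → K) where
  toFun a := fun n => qInt K q (n + 1) * a (n + 1)
  map_add' x y := by funext n; simp [Pi.add_apply, mul_add]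
  map_smul' c x := by funext n; simp [Pi.smul_apply, smul_eq_mul]; ring

/-- The coefficient `p_{j,j+d}` of `X^{j+d}` in `p_j` (zero when `j + d < 0`). -/
def pCoeff (K : Type*) [Field K] (p : ℕ → K[X]) (j : ℕ) (d : ℤ) : K :=
  if (j : ℤ) + d < 0 then 0 else (p j).coeff ((j + d).toNat)

/-- `β_d(k) = Σ_{j=0}^m p_{j,j+d} · {k}_q {k−1}_q ⋯ {k−j+1}_q`, describing the action of
the homogeneous degree-`d` part of `P = Σ_{j=0}^m p_j(M) D_q^j` on `t^k`. -/
def beta (K : Type*) [Field K] (q : K) (m : ℕ) (p : ℕ → K[X]) (d k : ℤ) : K :=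
  ∑ j ∈ Finset.range (m + 1),
    pCoeff K p j d * ∏ i ∈ Finset.range j, qInt K q (k - (i : ℤ))

/-- for `P = Σ_{j=0}^m p_j(M) D_q^j ≠ 0` and `d ∈ ℤ`, the following are
equivalent: (1) the homogeneous degree `d` occurs in `P`; (2) `β_d ≢ 0`; (3) `β_d` has
finitely many zeroes. Moreover, if `d` occurs but not with a differentiation then `β_d` is
the nonzero constant `p_{0,d}`, and if `d` occurs with a differentiation then `β_d` has at
most `m` zeroes and infinite range. -/
theorem beta_aux (K : Type*) [Field K] (q : K)
    (m : ℕ) (p : ℕ → K[X]) (d : ℤ)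
    (e : ℤ → K) (he : Function.Injective e) (a b : ℕ → K) (ha : ∀ i, a i ≠ 0)
    (hab : ∀ (k : ℤ) (i : ℕ), qInt K q (k - (i : ℤ)) = a i * e k + b i) :
    ((∃ j ≤ m, pCoeff K p j d ≠ 0) ↔ (∃ k : ℤ, beta K q m p d k ≠ 0)) ∧
    ((∃ k : ℤ, beta K q m p d k ≠ 0) ↔ {k : ℤ | beta K q m p d k = 0}.Finite) ∧
    ((∃ j ≤ m, pCoeff K p j d ≠ 0) ∧ ¬ (∃ j, 1 ≤ j ∧ j ≤ m ∧ pCoeff K p j d ≠ 0) →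
      pCoeff K p 0 d ≠ 0 ∧ ∀ k : ℤ, beta K q m p d k = pCoeff K p 0 d) ∧
    ((∃ j, 1 ≤ j ∧ j ≤ m ∧ pCoeff K p j d ≠ 0) →
      {k : ℤ | beta K q m p d k = 0}.ncard ≤ m ∧
      (Set.range (beta K q m p d)).Infinite) := by
  set c : ℕ → K := fun j => pCoeff K p j d with hc
  set F : K[X] := ∑ j ∈ Finset.range (m + 1),
      C (c j) * ∏ i ∈ Finset.range j, (C (a i) * X + C (b i)) with hF
  -- β k = F.eval (e k)
  have hbeta : ∀ k : ℤ, beta K q m p d k = F.eval (e k) := by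
    intro k
    rw [hF, eval_finset_sum]
    refine Finset.sum_congr rfl fun j _ => ?_
    rw [eval_mul, eval_C, eval_prod]
    refine congrArg _ (Finset.prod_congr rfl fun i _ => ?_)
    rw [eval_add, eval_mul, eval_C, eval_C, eval_X, hab k i]
  -- degrees of the products
  have hPdeg : ∀ j : ℕ, (∏ i ∈ Finset.range j, (C (a i) * X + C (b i))).natDegree = j := by
    intro j
    rw [natDegree_prod _ _ (fun i _ => ?_)]
    · simp [fun i => natDegree_linear (ha i)]
    · intro h
      have := natDegree_linear (b := b i) (ha i)
      simp [h] at this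
  have hPlead : ∀ j : ℕ,
      (∏ i ∈ Finset.range j, (C (a i) * X + C (b i))).leadingCoeff
        = ∏ i ∈ Finset.range j, a i := by
    intro j
    rw [leadingCoeff_prod]
    exact Finset.prod_congr rfl fun i _ => leadingCoeff_linear (ha i)
  have hFdeg : F.natDegree ≤ m := by
    refine natDegree_sum_le_of_forall_le _ _ fun j hj => ?_
    calc (C (c j) * ∏ i ∈ Finset.range j, (C (a i) * X + C (b i))).natDegree
        ≤ _ + _ := natDegree_mul_le
      _ ≤ m := by simp [hPdeg j, Nat.lt_succ_iff.mp (Finset.mem_range.mp hj)]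
  -- key coefficient computation at the top occurring index
  have hcoeff : ∀ J ≤ m, c J ≠ 0 → (∀ j, J < j → j ≤ m → c j = 0) →
      F.coeff J ≠ 0 := by
    intro J hJm hcJ htop
    have : F.coeff J = c J * ∏ i ∈ Finset.range J, a i := by
      rw [hF, finset_sum_coeff]
      rw [Finset.sum_eq_single J]
      · rw [coeff_C_mul]
        have h1 : (∏ i ∈ Finset.range J, (C (a i) * X + C (b i))).coeff J
            = ∏ i ∈ Finset.range J, a i := by
          have := hPlead J
          rwa [Polynomial.leadingCoeff, hPdeg J] at this
        rw [h1]
      · intro j hj hne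
        rcases lt_or_gt_of_ne hne with h | h
        · rw [coeff_C_mul, coeff_eq_zero_of_natDegree_lt, mul_zero]
          rw [hPdeg j]; exact h
        · rw [htop j h (Nat.lt_succ_iff.mp (Finset.mem_range.mp hj)), map_zero, zero_mul,
            coeff_zero]
      · intro h
        exact absurd (Finset.mem_range.mpr (Nat.lt_succ_of_le hJm)) h
    rw [this]
    exact mul_ne_zero hcJ (Finset.prod_ne_zero_iff.mpr fun i _ => ha i)
  -- backward: no coefficients → β ≡ 0
  have hzero : (∀ j ≤ m, c j = 0) → ∀ k, beta K q m p d k = 0 := by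
    intro h k
    unfold beta
    refine Finset.sum_eq_zero fun j hj => ?_
    exact mul_eq_zero_of_left (h j (Nat.lt_succ_iff.mp (Finset.mem_range.mp hj))) _
  -- if some coefficient occurs, get the maximal occurring index J
  have hMax : (∃ j ≤ m, c j ≠ 0) → ∃ J ≤ m, c J ≠ 0 ∧ ∀ j, J < j → j ≤ m → c j = 0 := by
    rintro ⟨j0, hj0m, hj0⟩
    have hS : ((Finset.range (m + 1)).filter (fun j => c j ≠ 0)).Nonempty :=
      ⟨j0, Finset.mem_filter.mpr ⟨Finset.mem_range.mpr (Nat.lt_succ_of_le hj0m), hj0⟩⟩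
    set J := ((Finset.range (m + 1)).filter (fun j => c j ≠ 0)).max' hS with hJ
    have hJmem := Finset.max'_mem _ hS
    rw [Finset.mem_filter, Finset.mem_range] at hJmem
    refine ⟨J, Nat.lt_succ_iff.mp hJmem.1, hJmem.2, fun j hJj hjm => ?_⟩
    by_contra hcj
    exact absurd (Finset.le_max' _ j (Finset.mem_filter.mpr
      ⟨Finset.mem_range.mpr (Nat.lt_succ_of_le hjm), hcj⟩)) (not_le.mpr hJj)
  -- consequences
  have hFne : (∃ j ≤ m, c j ≠ 0) → F ≠ 0 := by
    intro h
    obtain ⟨J, hJm, hcJ, htop⟩ := hMax h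
    intro h0
    exact hcoeff J hJm hcJ htop (by rw [h0, coeff_zero])
  have hroots : F ≠ 0 → {k : ℤ | beta K q m p d k = 0} = e ⁻¹' {x | F.IsRoot x} := by
    intro _
    ext k
    simp [hbeta k, Set.mem_preimage, IsRoot]
  have hfin : F ≠ 0 → {k : ℤ | beta K q m p d k = 0}.Finite := by
    intro hF0
    rw [hroots hF0]
    exact Set.Finite.preimage he.injOn (Polynomial.finite_setOf_isRoot hF0)
  have hconst : (∀ j, 1 ≤ j → j ≤ m → c j = 0) → ∀ k, beta K q m p d k = c 0 := by
    intro h k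
    unfold beta
    rw [Finset.sum_eq_single 0]
    · simp [hc]
    · intro j hj hne
      exact mul_eq_zero_of_left (h j (Nat.one_le_iff_ne_zero.mpr hne)
        (Nat.lt_succ_iff.mp (Finset.mem_range.mp hj))) _
    · intro h0; simp at h0
  have hncard : F ≠ 0 → {k : ℤ | beta K q m p d k = 0}.ncard ≤ F.natDegree := by
    intro hF0
    have h1 : {k : ℤ | beta K q m p d k = 0}.ncard
        = (e '' {k : ℤ | beta K q m p d k = 0}).ncard :=
      (Set.ncard_image_of_injective _ he).symm
    have hRfin : ({x | F.IsRoot x} : Set K).Finite := Polynomial.finite_setOf_isRoot hF0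
    have h2 : e '' {k : ℤ | beta K q m p d k = 0} ⊆ {x | F.IsRoot x} := by
      rintro x ⟨k, hk, rfl⟩
      simpa [IsRoot, hbeta k] using hk
    have h3 : ({x | F.IsRoot x} : Set K) = ↑F.roots.toFinset := by
      ext x
      simp [Polynomial.mem_roots, hF0, IsRoot]
    calc {k : ℤ | beta K q m p d k = 0}.ncard
        ≤ ({x | F.IsRoot x} : Set K).ncard := h1 ▸ Set.ncard_le_ncard h2 hRfin
      _ = F.roots.toFinset.card := by rw [h3, Set.ncard_coe_finset]
      _ ≤ F.roots.card := Multiset.toFinset_card_le _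
      _ ≤ F.natDegree := F.card_roots'
  have hdeg1 : (∃ j, 1 ≤ j ∧ j ≤ m ∧ c j ≠ 0) → 1 ≤ F.natDegree := by
    rintro ⟨j, hj1, hjm, hcj⟩
    obtain ⟨J, hJm, hcJ, htop⟩ := hMax ⟨j, hjm, hcj⟩
    have hjJ : j ≤ J := by
      by_contra h
      exact hcj (htop j (not_le.mp h) hjm)
    calc 1 ≤ J := le_trans hj1 hjJ
      _ ≤ F.natDegree := le_natDegree_of_ne_zero (hcoeff J hJm hcJ htop)
  have hinf : 1 ≤ F.natDegree → (Set.range (beta K q m p d)).Infinite := by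
    intro hd1
    by_contra hfinr
    rw [Set.not_infinite] at hfinr
    have huniv : (Set.univ : Set ℤ).Finite := by
      have heq : (Set.univ : Set ℤ)
          = e ⁻¹' (⋃ v ∈ Set.range (beta K q m p d), {x | (F - C v).IsRoot x}) := by
        ext k
        simp only [Set.mem_univ, true_iff, Set.mem_preimage, Set.mem_iUnion]
        exact ⟨beta K q m p d k, ⟨k, rfl⟩, by simp [IsRoot, hbeta k]⟩
      rw [heq]
      refine Set.Finite.preimage he.injOn ?_
      refine Set.Finite.biUnion hfinr fun v _ => Polynomial.finite_setOf_isRoot fun h0 => ?_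
      rw [sub_eq_zero] at h0
      rw [h0, natDegree_C] at hd1
      exact absurd hd1 (by norm_num)
    exact Set.infinite_univ huniv
  -- assemble
  by_cases hocc : ∃ j ≤ m, c j ≠ 0
  · have hF0 := hFne hocc
    have hne : ∃ k : ℤ, beta K q m p d k ≠ 0 := by
      by_contra hall
      push_neg at hall
      have : {k : ℤ | beta K q m p d k = 0} = Set.univ := by
        ext k; simp [hall k]
      exact Set.infinite_univ (this ▸ hfin hF0)
    refine ⟨⟨fun _ => hne, fun _ => hocc⟩, ⟨fun _ => hfin hF0, fun _ => hne⟩, ?_, ?_⟩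
    · rintro ⟨⟨j, hjm, hcj⟩, hnd⟩
      push_neg at hnd
      have hc0 : c 0 ≠ 0 := by
        rcases Nat.eq_zero_or_pos j with rfl | hj
        · exact hcj
        · exact absurd (hnd j hj hjm) hcj
      exact ⟨hc0, hconst (fun j hj1 hjm => hnd j hj1 hjm)⟩
    · intro hdiff
      exact ⟨le_trans (hncard hF0) hFdeg, hinf (hdeg1 hdiff)⟩
  · push_neg at hocc
    have hz := hzero fun j hj => hocc j hj
    have hzset : {k : ℤ | beta K q m p d k = 0} = Set.univ := by
      ext k; simp [hz k]
    constructor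
    · constructor
      · rintro ⟨j, hjm, hcj⟩; exact absurd (hocc j hjm) hcj
      · rintro ⟨k, hk⟩; exact absurd (hz k) hk
    refine ⟨⟨fun ⟨k, hk⟩ => absurd (hz k) hk, fun hf => ?_⟩, ?_, ?_⟩
    · exact absurd (hzset ▸ hf) Set.infinite_univ
    · rintro ⟨⟨j, hjm, hcj⟩, _⟩; exact absurd (hocc j hjm) hcj
    · rintro ⟨j, _, hjm, hcj⟩; exact absurd (hocc j hjm) hcj

theorem beta_trichotomy (K : Type*) [Field K] (q : K) (hq : q ≠ 0)
    (hqi : ∀ n : ℤ, n ≠ 0 → qInt K q n ≠ 0)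
    (m : ℕ) (p : ℕ → K[X]) (hp : ∃ j ≤ m, p j ≠ 0) (d : ℤ) :
    ((∃ j ≤ m, pCoeff K p j d ≠ 0) ↔ (∃ k : ℤ, beta K q m p d k ≠ 0)) ∧
    ((∃ k : ℤ, beta K q m p d k ≠ 0) ↔ {k : ℤ | beta K q m p d k = 0}.Finite) ∧
    ((∃ j ≤ m, pCoeff K p j d ≠ 0) ∧ ¬ (∃ j, 1 ≤ j ∧ j ≤ m ∧ pCoeff K p j d ≠ 0) →
      pCoeff K p 0 d ≠ 0 ∧ ∀ k : ℤ, beta K q m p d k = pCoeff K p 0 d) ∧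
    ((∃ j, 1 ≤ j ∧ j ≤ m ∧ pCoeff K p j d ≠ 0) →
      {k : ℤ | beta K q m p d k = 0}.ncard ≤ m ∧
      (Set.range (beta K q m p d)).Infinite) := by
  by_cases hq1 : q = 1
  · subst hq1
    refine beta_aux K 1 m p d (fun k => (k : K)) ?_ (fun _ => 1) (fun i => -(i : K))
      (fun _ => one_ne_zero) ?_
    · intro k k' h
      simp only at h
      by_contra hne
      apply hqi (k - k') (sub_ne_zero.mpr hne)
      simp only [qInt, if_pos rfl]
      push_cast
      rw [h]
      ring
    · intro k i
      simp only [qInt, if_pos rfl]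
      push_cast
      ring
  · refine beta_aux K q m p d (fun k => q ^ k) ?_
      (fun i => q ^ (-(i : ℤ)) / (q - 1)) (fun _ => -(1 / (q - 1)))
      (fun i => div_ne_zero (zpow_ne_zero _ hq) (sub_ne_zero.mpr hq1)) ?_
    · intro k k' h
      simp only at h
      by_contra hne
      apply hqi (k - k') (sub_ne_zero.mpr hne)
      simp only [qInt, if_neg hq1]
      rw [zpow_sub₀ hq, h, div_self (zpow_ne_zero _ hq)]
      simp
    · intro k i
      simp only [qInt, if_neg hq1]
      rw [zpow_sub₀ hq, zpow_neg]
      have h1 : q - 1 ≠ 0 := sub_ne_zero.mpr hq1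
      have h2 : (q : K) ^ (i : ℤ) ≠ 0 := zpow_ne_zero _ hq
      field_simp
      ring
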